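/- Let G be a nilpotent group and H a subgroup of G, and let π be a set of primes. Then the π-isolator I_π(H) = {g ∈ G : g^n ∈ H for some π-number n}, where a π-number is a positive integer all of whose prime factors lie in π, is a subgroup of G. -/

import Mathlib

universe u

open scoped commutatorElement

private lemma comm_mul_central {K : Type u} [Group K] {a z : K} (g : K)
    (hz : z ∈ Subgroup.center K) : ⁅a * z, g⁆ = ⁅a, g⁆ := by
  have h := Subgroup.mem_center_iff.mp hz
  simp only [commutatorElement_def, mul_inv_rev]
  calc a * z * g * (z⁻¹ * a⁻¹) * g⁻¹ = a * (z * g * z⁻¹) * a⁻¹ * g⁻¹ := by group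
    _ = a * g * a⁻¹ * g⁻¹ := by rw [← h g, mul_inv_cancel_right]

private lemma comm_pow_left {K : Type u} [Group K] {u g : K}
    (hc : ⁅u, g⁆ ∈ Subgroup.center K) (m : ℕ) : ⁅u ^ m, g⁆ = ⁅u, g⁆ ^ m := by
  have hcm : ∀ k : ℕ, ⁅u, g⁆ ^ k ∈ Subgroup.center K := fun k => pow_mem hc k
  have key : ∀ m : ℕ, u ^ m * g * (u ^ m)⁻¹ = ⁅u, g⁆ ^ m * g := by
    intro m
    induction m with
    | zero => simp
    | succ m ih =>
      have h1 : u * g * u⁻¹ = ⁅u, g⁆ * g := by group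
      calc u ^ (m+1) * g * (u ^ (m+1))⁻¹ = u * (u ^ m * g * (u ^ m)⁻¹) * u⁻¹ := by
            rw [pow_succ']; group
        _ = u * (⁅u, g⁆ ^ m * g) * u⁻¹ := by rw [ih]
        _ = ⁅u, g⁆ ^ m * (u * g * u⁻¹) := by
            have := Subgroup.mem_center_iff.mp (hcm m) u
            calc u * (⁅u, g⁆ ^ m * g) * u⁻¹ = (u * ⁅u, g⁆ ^ m) * g * u⁻¹ := by group
              _ = (⁅u, g⁆ ^ m * u) * g * u⁻¹ := by rw [this]
              _ = ⁅u, g⁆ ^ m * (u * g * u⁻¹) := by group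
        _ = ⁅u, g⁆ ^ m * (⁅u, g⁆ * g) := by rw [h1]
        _ = ⁅u, g⁆ ^ (m+1) * g := by rw [pow_succ]; group
  calc ⁅u ^ m, g⁆ = (u ^ m * g * (u ^ m)⁻¹) * g⁻¹ := by group
    _ = ⁅u, g⁆ ^ m * g * g⁻¹ := by rw [key m]
    _ = ⁅u, g⁆ ^ m := by group

private lemma lcs_quotient_le {K : Type u} [Group K] (N : Subgroup K) [N.Normal] (C : ℕ) :
    (⊤ : Subgroup (K ⧸ N)).lowerCentralSeries C ≤
      Subgroup.map (QuotientGroup.mk' N) ((⊤ : Subgroup K).lowerCentralSeries C) := by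
  induction C with
  | zero =>
    simpa using le_of_eq
      (Subgroup.map_top_of_surjective _ (QuotientGroup.mk'_surjective N)).symm
  | succ d ih =>
    have e1 : (⊤ : Subgroup (K ⧸ N)).lowerCentralSeries (d + 1) = ⁅(⊤ : Subgroup (K ⧸ N)).lowerCentralSeries d, ⊤⁆ := rfl
    have e2 : (⊤ : Subgroup K).lowerCentralSeries (d + 1) = ⁅(⊤ : Subgroup K).lowerCentralSeries d, ⊤⁆ := rfl
    rw [e1, e2, Subgroup.map_commutator]
    exact Subgroup.commutator_mono ih
      (le_of_eq (Subgroup.map_top_of_surjective _ (QuotientGroup.mk'_surjective N)).symm)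

private theorem key_lemma (n : ℕ) (C : ℕ) :
    ∀ (K : Type u) [Group K] (A : Subgroup K), (⊤ : Subgroup K).lowerCentralSeries C = ⊥ →
      (∀ g : K, g ^ n ∈ A ⊔ (⊤ : Subgroup K).lowerCentralSeries 1) →
      ∀ g : K, ∃ e : ℕ, g ^ n ^ e ∈ A := by
  induction C with
  | zero =>
    intro K _ A hC _ g
    refine ⟨0, ?_⟩
    have hg : g ∈ (⊥ : Subgroup K) := hC ▸ Subgroup.mem_top g
    rw [Subgroup.mem_bot] at hg
    simp [hg, A.one_mem]
  | succ C ih =>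
    intro K _ A hC hyp g
    rcases Nat.eq_zero_or_pos C with hC0 | hCpos
    · subst hC0
      refine ⟨1, ?_⟩
      rw [pow_one]
      have := hyp g
      rwa [hC, sup_bot_eq] at this
    -- main case
    obtain ⟨D, rfl⟩ : ∃ D, C = D + 1 := ⟨C - 1, (Nat.succ_pred_eq_of_pos hCpos).symm⟩
    set L := (⊤ : Subgroup K).lowerCentralSeries (D + 1) with hL
    have hLc : L ≤ Subgroup.center K := by
      intro z hz
      rw [Subgroup.mem_center_iff]
      intro w
      have hzw : ⁅z, w⁆ ∈ (⊤ : Subgroup K).lowerCentralSeries (D + 1 + 1) := by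
        rw [lowerCentralSeries_succ]
        exact Subgroup.commutator_mem_commutator hz (Subgroup.mem_top w)
      rw [hC, Subgroup.mem_bot, commutatorElement_eq_one_iff_mul_comm] at hzw
      exact hzw.symm
    -- quotient
    have hQC : (⊤ : Subgroup (K ⧸ L)).lowerCentralSeries (D + 1) = ⊥ := by
      rw [eq_bot_iff]
      refine le_trans (lcs_quotient_le L (D + 1)) (le_of_eq ?_)
      rw [Subgroup.map_eq_bot_iff, QuotientGroup.ker_mk']
    have hypQ : ∀ u : K ⧸ L,
        u ^ n ∈ A.map (QuotientGroup.mk' L) ⊔ (⊤ : Subgroup (K ⧸ L)).lowerCentralSeries 1 := by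
      intro u
      obtain ⟨g, rfl⟩ := QuotientGroup.mk'_surjective L u
      rw [← map_pow]
      have h1 : (QuotientGroup.mk' L) (g ^ n) ∈
          Subgroup.map (QuotientGroup.mk' L) (A ⊔ (⊤ : Subgroup K).lowerCentralSeries 1) :=
        Subgroup.mem_map_of_mem _ (hyp g)
      rw [Subgroup.map_sup] at h1
      exact sup_le_sup_left (lowerCentralSeries.map (QuotientGroup.mk' L) 1) _ h1
    have star : ∀ v : K, ∃ e : ℕ, ∃ a ∈ A, ∃ z ∈ L, v ^ n ^ e = a * z := by
      intro v
      obtain ⟨e, he⟩ := ih (K ⧸ L) (A.map (QuotientGroup.mk' L)) hQC hypQ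
        ((QuotientGroup.mk' L) v)
      rw [← map_pow] at he
      obtain ⟨a, ha, hEq⟩ := he
      refine ⟨e, a, ha, a⁻¹ * v ^ n ^ e, ?_, by group⟩
      have : (QuotientGroup.mk' L) (a⁻¹ * v ^ n ^ e) = 1 := by
        rw [map_mul, map_inv, hEq]
        group
      rwa [← MonoidHom.mem_ker, QuotientGroup.ker_mk'] at this
    -- the subgroup T
    let T : Subgroup K :=
      { carrier := {z | z ∈ L ∧ ∃ s : ℕ, z ^ n ^ s ∈ A}
        one_mem' := ⟨L.one_mem, 0, by simpa using A.one_mem⟩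
        mul_mem' := by
          rintro z w ⟨hzL, s, hs⟩ ⟨hwL, t, ht⟩
          refine ⟨L.mul_mem hzL hwL, s + t, ?_⟩
          have hcomm : Commute z w := (Subgroup.mem_center_iff.mp (hLc hzL) w).symm
          rw [hcomm.mul_pow]
          refine A.mul_mem ?_ ?_
          · rw [pow_add, pow_mul]; exact A.pow_mem hs _
          · rw [pow_add, mul_comm (n ^ s), pow_mul]; exact A.pow_mem ht _
        inv_mem' := by
          rintro z ⟨hzL, s, hs⟩
          exact ⟨L.inv_mem hzL, s, by rw [inv_pow]; exact A.inv_mem hs⟩ }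
    have hLT : L ≤ T := by
      have hLdef : L = ⁅(⊤ : Subgroup K).lowerCentralSeries D, ⊤⁆ := rfl
      rw [hLdef]
      rw [Subgroup.commutator_le]
      intro u hu w _
      have hugL : ⁅u, w⁆ ∈ L := by
        rw [hLdef]; exact Subgroup.commutator_mem_commutator hu (Subgroup.mem_top w)
      have hcen : ⁅u, w⁆ ∈ Subgroup.center K := hLc hugL
      obtain ⟨e, a, ha, z, hz, hEq⟩ := star u
      have h1 : ⁅u, w⁆ ^ n ^ e = ⁅a, w⁆ := by
        rw [← comm_pow_left hcen, hEq, comm_mul_central w (hLc hz)]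
      have hag : ⁅a, w⁆ ∈ Subgroup.center K := h1 ▸ pow_mem hcen _
      have hga : ⁅w, a⁆ ∈ Subgroup.center K := by
        rw [← commutatorElement_inv]
        exact (Subgroup.center K).inv_mem hag
      obtain ⟨e', a₃, ha₃, z₃, hz₃, hEq'⟩ := star w
      have h2 : ⁅w, a⁆ ^ n ^ e' = ⁅a₃, a⁆ := by
        rw [← comm_pow_left hga, hEq', comm_mul_central a (hLc hz₃)]
      have h3 : ⁅a₃, a⁆ ∈ A := by
        rw [commutatorElement_def]
        exact A.mul_mem (A.mul_mem (A.mul_mem ha₃ ha) (A.inv_mem ha₃)) (A.inv_mem ha)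
      have h4 : ⁅a, w⁆ ^ n ^ e' ∈ A := by
        have h5 : (⁅w, a⁆ ^ n ^ e')⁻¹ ∈ A := A.inv_mem (h2 ▸ h3)
        rwa [← inv_pow, commutatorElement_inv] at h5
      exact ⟨hugL, e + e', by rw [pow_add, pow_mul, h1]; exact h4⟩
    obtain ⟨e, a, ha, z, hz, hEq⟩ := star g
    obtain ⟨-, s, hs⟩ := hLT hz
    refine ⟨e + s, ?_⟩
    rw [pow_add, pow_mul, hEq]
    have hcomm : Commute a z := (Subgroup.mem_center_iff.mp (hLc hz) a)
    rw [hcomm.mul_pow]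
    exact A.mul_mem (A.pow_mem ha _) hs

def IsPiNumber (π : Set ℕ) (n : ℕ) : Prop :=
  0 < n ∧ ∀ p : ℕ, p.Prime → p ∣ n → p ∈ π

private lemma isPiNumber_one (π : Set ℕ) : IsPiNumber π 1 :=
  ⟨one_pos, fun _p hp hd => absurd (Nat.dvd_one.mp hd) hp.ne_one⟩

private lemma isPiNumber_mul {π : Set ℕ} {a b : ℕ} (ha : IsPiNumber π a)
    (hb : IsPiNumber π b) : IsPiNumber π (a * b) :=
  ⟨Nat.mul_pos ha.1 hb.1, fun p hp hd => by
    rcases (Nat.Prime.dvd_mul hp).mp hd with h | h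
    · exact ha.2 p hp h
    · exact hb.2 p hp h⟩

private lemma isPiNumber_pow {π : Set ℕ} {a : ℕ} (ha : IsPiNumber π a) (e : ℕ) :
    IsPiNumber π (a ^ e) :=
  ⟨Nat.pow_pos ha.1, fun p hp hd => ha.2 p hp (hp.dvd_of_dvd_pow hd)⟩

theorem pi_isolator_is_subgroup (G : Type*) [Group G] [Group.IsNilpotent G]
    (π : Set ℕ) (H : Subgroup G) :
    ∃ K : Subgroup G, (K : Set G) = {g : G | ∃ n : ℕ, IsPiNumber π n ∧ g ^ n ∈ H} := by
  refine ⟨{ carrier := {g : G | ∃ n : ℕ, IsPiNumber π n ∧ g ^ n ∈ H}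
            one_mem' := ⟨1, isPiNumber_one π, by simpa using H.one_mem⟩
            inv_mem' := ?inv
            mul_mem' := ?mul }, rfl⟩
  case inv =>
    rintro g ⟨m, hm, hgm⟩
    exact ⟨m, hm, by rw [inv_pow]; exact H.inv_mem hgm⟩
  case mul =>
  rintro x y ⟨aN, haπ, hxa⟩ ⟨bN, hbπ, hyb⟩
  set n := aN * bN with hn
  have hnπ : IsPiNumber π n := isPiNumber_mul haπ hbπ
  have hxn : x ^ n ∈ H := by rw [hn, pow_mul]; exact H.pow_mem hxa bN
  have hyn : y ^ n ∈ H := by rw [hn, mul_comm, pow_mul]; exact H.pow_mem hyb aN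
  set K₀ : Subgroup G := Subgroup.closure {x, y} with hK₀
  have hxK : x ∈ K₀ := Subgroup.subset_closure (by simp)
  have hyK : y ∈ K₀ := Subgroup.subset_closure (by simp)
  set x' : K₀ := ⟨x, hxK⟩
  set y' : K₀ := ⟨y, hyK⟩
  set A : Subgroup K₀ := Subgroup.closure {x' ^ n, y' ^ n} with hA
  have hAH : ∀ w ∈ A, (w : G) ∈ H := by
    intro w hw
    have : A ≤ H.comap K₀.subtype := by
      rw [hA, Subgroup.closure_le]
      rintro u (rfl | rfl)
      · exact hxn
      · exact hyn
    exact this hw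
  have hGen : Subgroup.closure ({x', y'} : Set K₀) = ⊤ := by
    have hpre : (Subtype.val ⁻¹' ({x, y} : Set G) : Set K₀) = {x', y'} := by
      ext ⟨g, hg⟩
      exact Iff.intro (fun h => h.elim (fun h => Or.inl (Subtype.ext h)) (fun h => Or.inr (Subtype.ext h)))
        (fun h => h.elim (fun h => Or.inl (congrArg Subtype.val h)) (fun h => Or.inr (congrArg Subtype.val h)))
    rw [← hpre]
    exact Subgroup.closure_closure_coe_preimage
  have hyp : ∀ g : K₀, g ^ n ∈ A ⊔ (⊤ : Subgroup K₀).lowerCentralSeries 1 := by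
    have hofker : (Abelianization.of : K₀ →* Abelianization K₀) =
        QuotientGroup.mk' (commutator K₀) := rfl
    set ψ : K₀ →* Abelianization K₀ :=
      (powMonoidHom n).comp Abelianization.of with hψ
    set W : Subgroup K₀ := Subgroup.comap ψ (A.map Abelianization.of) with hW
    have hxW : x' ∈ W := by
      rw [hW, Subgroup.mem_comap]
      show (Abelianization.of x') ^ n ∈ A.map Abelianization.of
      rw [← map_pow]
      exact Subgroup.mem_map_of_mem _ (Subgroup.subset_closure (Or.inl rfl))
    have hyW : y' ∈ W := by
      rw [hW, Subgroup.mem_comap]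
      show (Abelianization.of y') ^ n ∈ A.map Abelianization.of
      rw [← map_pow]
      exact Subgroup.mem_map_of_mem _ (Subgroup.subset_closure (Or.inr rfl))
    have hWtop : ∀ g : K₀, g ∈ W := by
      intro g
      have : Subgroup.closure ({x', y'} : Set K₀) ≤ W := by
        rw [Subgroup.closure_le]
        rintro u (rfl | rfl)
        · exact hxW
        · exact hyW
      rw [hGen] at this
      exact this (Subgroup.mem_top g)
    intro g
    have hg := hWtop g
    rw [hW, Subgroup.mem_comap] at hg
    obtain ⟨w, hw, hEq⟩ := hg
    have hEq' : Abelianization.of w = Abelianization.of (g ^ n) := by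
      rw [map_pow]; exact hEq
    have hker : w⁻¹ * g ^ n ∈ commutator K₀ := by
      have h1 : Abelianization.of (w⁻¹ * g ^ n) = 1 := by
        rw [map_mul, map_inv, hEq']
        group
      rwa [← MonoidHom.mem_ker, Abelianization.ker_of] at h1
    have : g ^ n = w * (w⁻¹ * g ^ n) := by group
    rw [this]
    exact Subgroup.mul_mem _ (Subgroup.mem_sup_left hw)
      (Subgroup.mem_sup_right (by rwa [lowerCentralSeries_one]))
  obtain ⟨e, he⟩ := key_lemma n (Group.nilpotencyClass K₀) K₀ A
    (lowerCentralSeries_nilpotencyClass) hyp (x' * y')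
  refine ⟨n ^ e, isPiNumber_pow hnπ e, ?_⟩
  have := hAH _ he
  simpa using this
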